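/- Let φ : (-1,1) → ℝ be continuous with φ' ≥ -α, lim_{s→±1^∓}φ(s) = ±∞. Let θ ∈ L^∞(𝕋²) with ‖θ‖_{L^∞} ≤ 1, φ(θ) ∈ L¹(𝕋²), f ∈ L¹(𝕋²), and suppose the mean m(θ) = 0 and φ(θ) - m(φ(θ)) = f almost everywhere on 𝕋². Then |m(φ(θ))| ≤ C·(‖f‖_{L¹} + 1), where C depends only on α and φ(0) and the thresholds of φ. -/

import Mathlib

open MeasureTheory

set_option maxHeartbeats 1000000 in
/-- Mean-value estimate for the singular chemical potential on the 2-torus: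
if `m(θ) = 0` and `φ(θ) - m(φ(θ)) = f` a.e., then `|m(φ(θ))| ≤ C(‖f‖_{L¹} + 1)`
with `C` depending only on `φ` (through `α`, `φ(0)` and its thresholds). -/
theorem mean_value_estimate (φ φd : ℝ → ℝ) (α : ℝ) (hα : 0 < α)
    (hc : ContinuousOn φ (Set.Ioo (-1 : ℝ) 1))
    (htop : Filter.Tendsto φ (nhdsWithin 1 (Set.Iio 1)) Filter.atTop)
    (hbot : Filter.Tendsto φ (nhdsWithin (-1) (Set.Ioi (-1))) Filter.atBot)
    (hφd : ∀ s ∈ Set.Ioo (-1 : ℝ) 1, HasDerivAt φ (φd s) s)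
    (hge : ∀ s ∈ Set.Ioo (-1 : ℝ) 1, -α ≤ φd s) :
    ∃ C > (0 : ℝ), ∀ θ f : UnitAddCircle × UnitAddCircle → ℝ,
      AEStronglyMeasurable θ volume →
      (∀ᵐ x, θ x ∈ Set.Ioo (-1 : ℝ) 1) →
      Integrable (fun x => φ (θ x)) →
      Integrable f →
      (∫ x, θ x) = 0 →
      (∀ᵐ x, φ (θ x) - ⨍ y, φ (θ y) = f x) →
      |⨍ x, φ (θ x)| ≤ C * ((∫ x, |f x|) + 1) := by
  haveI hP1 : IsProbabilityMeasure (volume : Measure UnitAddCircle) :=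
    ⟨UnitAddCircle.measure_univ⟩
  haveI hP : IsProbabilityMeasure (volume : Measure (UnitAddCircle × UnitAddCircle)) := by
    constructor
    rw [← Set.univ_prod_univ, Measure.volume_eq_prod, Measure.prod_prod,
      UnitAddCircle.measure_univ, one_mul]
  -- Monotonicity of ψ = φ + α • id on (-1,1)
  have hψ : ∀ x ∈ Set.Ioo (-1 : ℝ) 1, HasDerivAt (fun s => φ s + α * s) (φd x + α) x := by
    intro x hx
    have h := (hφd x hx).add ((hasDerivAt_id' x).const_mul α)
    rw [mul_one] at h
    exact h
  have hmono : MonotoneOn (fun s => φ s + α * s) (Set.Ioo (-1 : ℝ) 1) := by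
    have hconv : Convex ℝ (Set.Ioo (-1 : ℝ) 1) := convex_Ioo _ _
    refine monotoneOn_of_deriv_nonneg hconv
      (hc.add (continuousOn_const.mul continuousOn_id)) ?_ ?_
    · intro x hx
      rw [interior_Ioo] at hx
      exact (hψ x hx).differentiableAt.differentiableWithinAt
    · intro x hx
      rw [interior_Ioo] at hx
      rw [(hψ x hx).deriv]
      linarith [hge x hx]
  have key : ∀ a b : ℝ, a ∈ Set.Ioo (-1 : ℝ) 1 → b ∈ Set.Ioo (-1 : ℝ) 1 → a ≤ b →
      -α * (b - a) ≤ φ b - φ a := by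
    intro a b ha hb hab
    have := hmono ha hb hab
    simp only at this
    nlinarith
  have hhalf : (1 / 2 : ℝ) ∈ Set.Ioo (-1 : ℝ) 1 := by norm_num
  have hnhalf : (-(1 / 2) : ℝ) ∈ Set.Ioo (-1 : ℝ) 1 := by norm_num
  set K : ℝ := φ (1 / 2) + (3 / 2) * α with hK
  set K' : ℝ := φ (-(1 / 2)) - (3 / 2) * α with hK'
  clear_value K K'
  refine ⟨3 + 2 * α + |K| + |K'|, by positivity, ?_⟩
  intro θ f hθm hmem hφint hf hmean haef
  set M : ℝ := ∫ x, φ (θ x) with hM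
  clear_value M
  have havg : (⨍ x, φ (θ x)) = M := by rw [hM]; exact average_eq_integral _ _
  rw [havg] at haef ⊢
  have hθint : Integrable θ := by
    refine (integrable_const (1 : ℝ)).mono' hθm ?_
    filter_upwards [hmem] with x hx
    rw [Real.norm_eq_abs]
    exact abs_le.mpr ⟨hx.1.le, hx.2.le⟩
  have hIf : (0 : ℝ) ≤ ∫ x, |f x| := integral_nonneg fun x => abs_nonneg _
  have hRint : Integrable (fun x => 3 * |f x| + 2 * α) :=
    (hf.abs.const_mul 3).add (integrable_const _)
  have hint2 : Integrable (fun x => 2 * θ x) := hθint.const_mul 2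
  have hRval : (∫ x, 3 * |f x| + 2 * α) = 3 * (∫ x, |f x|) + 2 * α := by
    rw [integral_add (hf.abs.const_mul 3) (integrable_const _), integral_const_mul,
      integral_const]
    simp
  -- Upper bound: M - K ≤ 3∫|f| + 2α
  have hup : M - K ≤ 3 * (∫ x, |f x|) + 2 * α := by
    have hpt : ∀ᵐ x, (M - K) * (1 - 2 * θ x) ≤ 3 * |f x| + 2 * α := by
      filter_upwards [hmem, haef] with x hx hfx
      set t := θ x with ht
      clear_value t
      rcases le_or_gt t (1 / 2) with hle | hgt
      · -- φ t ≤ K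
        have h1 : -α * (1 / 2 - t) ≤ φ (1 / 2) - φ t := key t (1 / 2) hx hhalf hle
        have h2 : φ t ≤ K := by
          nlinarith [mul_pos hα (show (0:ℝ) < t + 1 by linarith [hx.1])]
        have h3 : M - K ≤ |f x| := by
          linarith [neg_abs_le (f x)]
        rcases le_or_gt M K with hMK | hMK
        · nlinarith [abs_nonneg (f x),
            mul_nonneg (show (0:ℝ) ≤ K - M by linarith) (show (0:ℝ) ≤ 1 - 2 * t by linarith)]
        · nlinarith [abs_nonneg (f x),
            mul_nonneg (show (0:ℝ) ≤ M - K by linarith)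
              (show (0:ℝ) ≤ 2 + 2 * t by linarith [hx.1])]
      · -- t > 1/2 : φ t ≥ K - 2α
        have h1 : -α * (t - 1 / 2) ≤ φ t - φ (1 / 2) := key (1 / 2) t hhalf hx hgt.le
        have h2 : K - 2 * α ≤ φ t := by
          nlinarith [mul_pos hα (show (0:ℝ) < 1 - t by linarith [hx.2])]
        rcases le_or_gt M K with hMK | hMK
        · nlinarith [abs_nonneg (f x), le_abs_self (f x),
            mul_nonneg (show (0:ℝ) ≤ K - M by linarith)
              (show (0:ℝ) ≤ 2 - 2 * t by linarith [hx.2])]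
        · nlinarith [abs_nonneg (f x),
            mul_pos (show (0:ℝ) < M - K by linarith) (show (0:ℝ) < 2 * t - 1 by linarith)]
    have hLint : Integrable (fun x => (M - K) * (1 - 2 * θ x)) :=
      ((integrable_const (1 : ℝ)).sub hint2).const_mul _
    have := integral_mono_ae hLint hRint hpt
    rw [hRval, integral_const_mul, integral_sub (integrable_const (1 : ℝ)) hint2,
      integral_const_mul, hmean, integral_const] at this
    simpa using this
  -- Lower bound: K' - M ≤ 3∫|f| + 2α
  have hlow : K' - M ≤ 3 * (∫ x, |f x|) + 2 * α := by
    have hpt : ∀ᵐ x, (K' - M) * (1 + 2 * θ x) ≤ 3 * |f x| + 2 * α := by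
      filter_upwards [hmem, haef] with x hx hfx
      set t := θ x with ht
      clear_value t
      rcases le_or_gt (-(1 / 2)) t with hle | hgt
      · -- φ t ≥ K'
        have h1 : -α * (t - (-(1 / 2))) ≤ φ t - φ (-(1 / 2)) := key (-(1 / 2)) t hnhalf hx hle
        have h2 : K' ≤ φ t := by
          nlinarith [mul_pos hα (show (0:ℝ) < 1 - t by linarith [hx.2])]
        have h3 : K' - M ≤ |f x| := by
          linarith [le_abs_self (f x)]
        rcases le_or_gt K' M with hMK | hMK
        · nlinarith [abs_nonneg (f x),
            mul_nonneg (show (0:ℝ) ≤ M - K' by linarith) (show (0:ℝ) ≤ 1 + 2 * t by linarith)]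
        · nlinarith [abs_nonneg (f x),
            mul_nonneg (show (0:ℝ) ≤ K' - M by linarith)
              (show (0:ℝ) ≤ 2 - 2 * t by linarith [hx.2])]
      · -- t < -1/2 : φ t ≤ K' + 2α
        have h1 : -α * ((-(1 / 2)) - t) ≤ φ (-(1 / 2)) - φ t := key t (-(1 / 2)) hx hnhalf hgt.le
        have h2 : φ t ≤ K' + 2 * α := by
          nlinarith [mul_pos hα (show (0:ℝ) < t + 1 by linarith [hx.1])]
        rcases le_or_gt K' M with hMK | hMK
        · nlinarith [abs_nonneg (f x), neg_abs_le (f x),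
            mul_nonneg (show (0:ℝ) ≤ M - K' by linarith)
              (show (0:ℝ) ≤ 2 + 2 * t by linarith [hx.1])]
        · nlinarith [abs_nonneg (f x), neg_abs_le (f x),
            mul_pos (show (0:ℝ) < K' - M by linarith)
              (show (0:ℝ) < -(1 + 2 * t) by linarith)]
    have hLint : Integrable (fun x => (K' - M) * (1 + 2 * θ x)) :=
      ((integrable_const (1 : ℝ)).add hint2).const_mul _
    have := integral_mono_ae hLint hRint hpt
    rw [hRval, integral_const_mul, integral_add (integrable_const (1 : ℝ)) hint2,
      integral_const_mul, hmean, integral_const] at this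
    simpa using this
  rw [abs_le]
  constructor
  · nlinarith [neg_abs_le K', abs_nonneg K, abs_nonneg K',
      mul_nonneg (show (0:ℝ) ≤ 2 * α + |K| + |K'| by positivity) hIf]
  · nlinarith [le_abs_self K, abs_nonneg K, abs_nonneg K',
      mul_nonneg (show (0:ℝ) ≤ 2 * α + |K| + |K'| by positivity) hIf]
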